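/- arXiv:1403.2915 — 2 statements merged into one kernel-verified Lean document; each statement's English description precedes it below -/
import Mathlib

section
/- The weak Lebesgue space embeds into Morrey–Campanato spaces: if 1 ≤ p < n/α and f ∈ L^{n/α,∞}(ℝ^n), then f ∈ 𝔏^{α,p}(ℝ^n) with ‖f‖_{𝔏^{α,p}} ≤ C ‖f‖_{L^{n/α,∞}}. -/
open MeasureTheory ENNReal Set

noncomputable section

def cube (n : ℕ) (x : Fin n → ℝ) (r : ℝ) : Set (Fin n → ℝ) :=
  {y | ∀ i, |y i - x i| ≤ r / 2}

/-- The Morrey–Campanato norm `𝔏^{α,p}` on ℝⁿ. -/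
def morreyNormX (n : ℕ) (α p : ℝ) (f : (Fin n → ℝ) → ℝ≥0∞) : ℝ≥0∞ :=
  ⨆ (x : Fin n → ℝ) (r : ℝ) (_ : 0 < r),
    ENNReal.ofReal (r ^ α) *
      ((ENNReal.ofReal (r ^ (n : ℕ)))⁻¹ * ∫⁻ y in cube n x r, (f y) ^ p) ^ (1 / p)

/-- The weak `L^q` quasi-norm on ℝⁿ. -/
def weakNorm (n : ℕ) (q : ℝ) (f : (Fin n → ℝ) → ℂ) : ℝ≥0∞ :=
  ⨆ (lam : ℝ) (_ : 0 < lam),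
    ENNReal.ofReal lam *
      (volume {x : Fin n → ℝ | ENNReal.ofReal lam < (‖f x‖₊ : ℝ≥0∞)}) ^ (1 / q)

lemma cube_eq (n : ℕ) (x : Fin n → ℝ) (r : ℝ) :
    cube n x r = Set.pi univ (fun i => Icc (x i - r/2) (x i + r/2)) := by
  ext y
  simp only [cube, mem_setOf_eq, mem_pi, mem_univ, forall_true_left, mem_Icc, true_implies,
    abs_sub_le_iff]
  constructor <;> intro h i <;> have := h i <;> constructor <;> linarith [this.1, this.2]

lemma volume_cube (n : ℕ) (x : Fin n → ℝ) (r : ℝ) (hr : 0 ≤ r) :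
    volume (cube n x r) = ENNReal.ofReal (r ^ n) := by
  rw [cube_eq, volume_pi_pi]
  simp only [Real.volume_Icc]
  have : ∀ i : Fin n, ENNReal.ofReal (x i + r / 2 - (x i - r / 2)) = ENNReal.ofReal r := by
    intro i; congr 1; ring
  rw [Finset.prod_congr rfl (fun i _ => this i), Finset.prod_const, ← ENNReal.ofReal_pow hr]
  simp

lemma weak_meas_bound (n : ℕ) (q : ℝ) (hq : 0 < q) (f : (Fin n → ℝ) → ℂ)
    (lam : ℝ) (hlam : 0 < lam) :
    volume {x : Fin n → ℝ | ENNReal.ofReal lam < (‖f x‖₊ : ℝ≥0∞)}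
      ≤ (ENNReal.ofReal (lam ^ q))⁻¹ * (weakNorm n q f) ^ q := by
  set μ := volume {x : Fin n → ℝ | ENNReal.ofReal lam < (‖f x‖₊ : ℝ≥0∞)} with hμ
  have h1 : ENNReal.ofReal lam * μ ^ (1 / q) ≤ weakNorm n q f := by
    have := le_iSup (fun lam => ⨆ _ : 0 < lam,
      ENNReal.ofReal lam *
        (volume {x : Fin n → ℝ | ENNReal.ofReal lam < (‖f x‖₊ : ℝ≥0∞)}) ^ (1 / q)) lam
    rw [iSup_pos hlam] at this
    exact this
  have ha0 : (ENNReal.ofReal lam) ≠ 0 := by simp [hlam]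
  have hat : (ENNReal.ofReal lam) ≠ ⊤ := ofReal_ne_top
  have h2 : μ ^ (1 / q) ≤ (ENNReal.ofReal lam)⁻¹ * weakNorm n q f := by
    calc μ ^ (1/q) = (ENNReal.ofReal lam)⁻¹ * (ENNReal.ofReal lam * μ ^ (1/q)) := by
          rw [← mul_assoc, ENNReal.inv_mul_cancel ha0 hat, one_mul]
      _ ≤ (ENNReal.ofReal lam)⁻¹ * weakNorm n q f := mul_le_mul_right h1 _
  have h3 : μ = (μ ^ (1/q)) ^ q := by
    rw [← ENNReal.rpow_mul, one_div, inv_mul_cancel₀ hq.ne', ENNReal.rpow_one]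
  rw [h3]
  calc (μ ^ (1/q)) ^ q ≤ ((ENNReal.ofReal lam)⁻¹ * weakNorm n q f) ^ q :=
        ENNReal.rpow_le_rpow h2 hq.le
    _ = (ENNReal.ofReal (lam ^ q))⁻¹ * (weakNorm n q f) ^ q := by
        rw [ENNReal.mul_rpow_of_nonneg _ _ hq.le, ENNReal.inv_rpow,
          ← ENNReal.ofReal_rpow_of_pos hlam]

lemma real_arith (p q lam0 : ℝ) (hlam0 : 0 < lam0) (k : ℕ) :
    ((2:ℝ)^(k+1)*lam0)^p * (((2:ℝ)^k*lam0)^q)⁻¹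
      = (2^p * lam0^(p-q)) * ((2:ℝ)^(p-q))^k := by
  have h2 : (0:ℝ) < 2 := two_pos
  rw [← Real.rpow_natCast (2:ℝ) k, ← Real.rpow_natCast (2:ℝ) (k+1),
    ← Real.rpow_natCast ((2:ℝ)^(p-q)) k,
    Real.mul_rpow (by positivity) hlam0.le, Real.mul_rpow (by positivity) hlam0.le,
    ← Real.rpow_mul h2.le, ← Real.rpow_mul h2.le, ← Real.rpow_mul h2.le,
    mul_inv, ← Real.rpow_neg h2.le, ← Real.rpow_neg hlam0.le]
  push_cast
  have A : (2:ℝ) ^ (((k:ℝ)+1)*p) * 2 ^ (-((k:ℝ)*q)) = 2^p * 2^((p-q)*(k:ℝ)) := by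
    rw [← Real.rpow_add h2, ← Real.rpow_add h2]; congr 1; ring
  have B : lam0 ^ p * lam0 ^ (-q) = lam0 ^ (p-q) := by
    rw [← Real.rpow_add hlam0]; ring_nf
  calc (2:ℝ) ^ (((k:ℝ)+1)*p) * lam0^p * (2 ^ (-((k:ℝ)*q)) * lam0 ^ (-q))
      = ((2:ℝ) ^ (((k:ℝ)+1)*p) * 2 ^ (-((k:ℝ)*q))) * (lam0^p * lam0 ^ (-q)) := by ring
    _ = (2^p * 2^((p-q)*(k:ℝ))) * lam0^(p-q) := by rw [A, B]
    _ = (2^p * lam0^(p-q)) * 2^((p-q)*(k:ℝ)) := by ring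

lemma pointwise_bound {n : ℕ} (f : (Fin n → ℝ) → ℂ) (p lam0 : ℝ) (hp : 0 < p)
    (hl : 0 < lam0) (T : ℕ → Set (Fin n → ℝ))
    (hT : ∀ k, {x | ENNReal.ofReal ((2:ℝ)^k * lam0) < (‖f x‖₊ : ℝ≥0∞)} ⊆ T k)
    (y : Fin n → ℝ) :
    (‖f y‖₊ : ℝ≥0∞) ^ p ≤ ENNReal.ofReal (lam0 ^ p)
      + ∑' k : ℕ, ENNReal.ofReal (((2:ℝ)^(k+1)*lam0)^p) * (T k).indicator 1 y := by
  set t := ‖f y‖ with ht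
  have hg : (‖f y‖₊ : ℝ≥0∞) = ENNReal.ofReal t := by rw [← ENNReal.ofReal_coe_nnreal, coe_nnnorm]
  rcases le_or_gt t lam0 with h | h
  · refine le_trans ?_ le_self_add
    rw [hg, ← ENNReal.ofReal_rpow_of_pos hl]
    exact ENNReal.rpow_le_rpow (ENNReal.ofReal_le_ofReal h) hp.le
  · have ht0 : 0 < t := lt_trans hl h
    have hex : ∃ k : ℕ, t ≤ (2:ℝ)^k * lam0 := by
      obtain ⟨m, hm⟩ := pow_unbounded_of_one_lt (t / lam0) one_lt_two
      exact ⟨m, by rw [← div_le_iff₀ hl]; exact hm.le⟩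
    set k' := Nat.find hex with hk'
    have hspec : t ≤ (2:ℝ)^k' * lam0 := Nat.find_spec hex
    have hk'pos : 0 < k' := by
      rcases Nat.eq_zero_or_pos k' with h0 | h0
      · exfalso; rw [h0] at hspec; simp at hspec; linarith
      · exact h0
    set j := k' - 1 with hj
    have hjk : j + 1 = k' := Nat.succ_pred_eq_of_pos hk'pos
    have hmin : ¬ (t ≤ (2:ℝ)^j * lam0) := Nat.find_min hex (by omega)
    push_neg at hmin
    have hyS : y ∈ T j := hT j (by
      simp only [mem_setOf_eq]
      rw [hg]
      exact ENNReal.ofReal_lt_ofReal_iff ht0 |>.mpr hmin)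
    refine le_trans ?_ le_add_self
    refine le_trans ?_ (ENNReal.le_tsum j)
    rw [indicator_of_mem hyS, Pi.one_apply, mul_one, hg, ENNReal.ofReal_rpow_of_pos ht0]
    apply ENNReal.ofReal_le_ofReal
    rw [hjk]
    exact Real.rpow_le_rpow ht0.le hspec hp.le

lemma cube_int_bound (n : ℕ) (q p lam0 : ℝ) (hq : 0 < q) (hp : 0 < p)
    (hl : 0 < lam0) (f : (Fin n → ℝ) → ℂ) (x : Fin n → ℝ) (r : ℝ) (hr : 0 < r) :
    ∫⁻ y in cube n x r, (‖f y‖₊ : ℝ≥0∞) ^ p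
      ≤ ENNReal.ofReal (lam0 ^ p) * ENNReal.ofReal (r ^ n)
        + ENNReal.ofReal (2 ^ p * lam0 ^ (p - q)) * (weakNorm n q f) ^ q
            * (1 - ENNReal.ofReal ((2:ℝ) ^ (p - q)))⁻¹ := by
  set W := weakNorm n q f with hW
  set S : ℕ → Set (Fin n → ℝ) :=
    fun k => {x | ENNReal.ofReal ((2:ℝ)^k * lam0) < (‖f x‖₊ : ℝ≥0∞)} with hS
  set T : ℕ → Set (Fin n → ℝ) := fun k => toMeasurable volume (S k) with hT
  have hTm : ∀ k, MeasurableSet (T k) := fun k => measurableSet_toMeasurable _ _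
  have hST : ∀ k, S k ⊆ T k := fun k => subset_toMeasurable _ _
  have step1 : ∫⁻ y in cube n x r, (‖f y‖₊ : ℝ≥0∞) ^ p
      ≤ ∫⁻ y in cube n x r, (ENNReal.ofReal (lam0 ^ p)
        + ∑' k : ℕ, ENNReal.ofReal (((2:ℝ)^(k+1)*lam0)^p) * (T k).indicator 1 y) :=
    lintegral_mono (pointwise_bound f p lam0 hp hl T hST)
  have step2 : ∫⁻ y in cube n x r, (ENNReal.ofReal (lam0 ^ p)
        + ∑' k : ℕ, ENNReal.ofReal (((2:ℝ)^(k+1)*lam0)^p) * (T k).indicator 1 y)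
      = ENNReal.ofReal (lam0 ^ p) * volume (cube n x r)
        + ∑' k : ℕ, ENNReal.ofReal (((2:ℝ)^(k+1)*lam0)^p)
            * ∫⁻ y in cube n x r, (T k).indicator 1 y := by
    rw [lintegral_add_left measurable_const, lintegral_const,
      Measure.restrict_apply_univ, lintegral_tsum]
    · congr 1
      refine tsum_congr fun k => ?_
      rw [lintegral_const_mul _ (measurable_one.indicator (hTm k))]
    · intro k
      exact (measurable_const.mul (measurable_one.indicator (hTm k))).aemeasurable
  have step3 : ∀ k : ℕ, ∫⁻ y in cube n x r, (T k).indicator 1 y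
      ≤ (ENNReal.ofReal (((2:ℝ)^k*lam0) ^ q))⁻¹ * W ^ q := by
    intro k
    calc ∫⁻ y in cube n x r, (T k).indicator 1 y
        ≤ ∫⁻ y, (T k).indicator 1 y := setLIntegral_le_lintegral _ _
      _ = volume (T k) := by rw [lintegral_indicator (hTm k)]; simp
      _ = volume (S k) := measure_toMeasurable _
      _ ≤ _ := weak_meas_bound n q hq f _ (by positivity)
  have step4 : ∑' k : ℕ, ENNReal.ofReal (((2:ℝ)^(k+1)*lam0)^p)
            * ∫⁻ y in cube n x r, (T k).indicator 1 y
      ≤ ENNReal.ofReal (2 ^ p * lam0 ^ (p - q)) * W ^ q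
          * (1 - ENNReal.ofReal ((2:ℝ) ^ (p - q)))⁻¹ := by
    calc ∑' k : ℕ, ENNReal.ofReal (((2:ℝ)^(k+1)*lam0)^p)
            * ∫⁻ y in cube n x r, (T k).indicator 1 y
        ≤ ∑' k : ℕ, ENNReal.ofReal (((2:ℝ)^(k+1)*lam0)^p)
            * ((ENNReal.ofReal (((2:ℝ)^k*lam0) ^ q))⁻¹ * W ^ q) :=
          ENNReal.tsum_le_tsum fun k => mul_le_mul_right (step3 k) _
      _ = ∑' k : ℕ, (ENNReal.ofReal (2 ^ p * lam0 ^ (p - q)) * W ^ q)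
            * (ENNReal.ofReal ((2:ℝ) ^ (p - q))) ^ k := by
          refine tsum_congr fun k => ?_
          rw [← ENNReal.ofReal_inv_of_pos (by positivity), ← mul_assoc,
            ← ENNReal.ofReal_mul (by positivity), real_arith p q lam0 hl k,
            ENNReal.ofReal_mul (by positivity), ENNReal.ofReal_pow (by positivity)]
          ring
      _ = ENNReal.ofReal (2 ^ p * lam0 ^ (p - q)) * W ^ q
          * (1 - ENNReal.ofReal ((2:ℝ) ^ (p - q)))⁻¹ := by
          rw [ENNReal.tsum_mul_left, ENNReal.tsum_geometric]
  calc ∫⁻ y in cube n x r, (‖f y‖₊ : ℝ≥0∞) ^ p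
      ≤ _ := step1
    _ = _ := step2
    _ ≤ _ := by
        rw [volume_cube n x r hr.le]
        exact add_le_add_right step4 _

/-- `L^{n/α,∞}(ℝⁿ) ⊂ 𝔏^{α,p}(ℝⁿ)` for `1 ≤ p < n/α`. -/
theorem statement_3 (n : ℕ) (α p : ℝ) (hα : 0 < α) (hp : 1 ≤ p) (hp' : p < n / α) :
    ∃ C : ℝ≥0∞, C < ⊤ ∧ ∀ f : (Fin n → ℝ) → ℂ,
      morreyNormX n α p (fun x => (‖f x‖₊ : ℝ≥0∞)) ≤ C * weakNorm n ((n : ℝ) / α) f := by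
  set q := (n : ℝ) / α with hqdef
  have hp0 : (0:ℝ) < p := lt_of_lt_of_le one_pos hp
  have hq1 : 1 < q := lt_of_le_of_lt hp hp'
  have hq0 : 0 < q := lt_trans one_pos hq1
  have hpq : p < q := hp'
  have hαq : α * q = n := by
    rw [hqdef]; field_simp
  have hn : (0:ℝ) < n := by nlinarith
  -- constants
  set rho := ENNReal.ofReal ((2:ℝ) ^ (p - q)) with hrho
  have hrho1 : rho < 1 := by
    rw [hrho, ← ENNReal.ofReal_one]
    exact ENNReal.ofReal_lt_ofReal_iff one_pos |>.mpr
      (Real.rpow_lt_one_of_one_lt_of_neg one_lt_two (by linarith))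
  set C1 := (1 - rho)⁻¹ with hC1def
  have hC1top : C1 ≠ ⊤ := by
    rw [hC1def, Ne, ENNReal.inv_eq_top, tsub_eq_zero_iff_le]
    exact not_le.mpr hrho1
  set C2 := 1 + ENNReal.ofReal ((2:ℝ) ^ p) * C1 with hC2def
  have hC2top : C2 ≠ ⊤ := by
    rw [hC2def]
    exact ENNReal.add_ne_top.mpr ⟨one_ne_top, ENNReal.mul_ne_top ofReal_ne_top hC1top⟩
  have hC21 : (1:ℝ≥0∞) ≤ C2 := le_self_add
  have hC20 : C2 ≠ 0 := by
    intro h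
    rw [h] at hC21
    simp at hC21
  set C := C2 ^ (1/p) with hCdef
  have hCtop : C < ⊤ := ENNReal.rpow_lt_top_of_nonneg (by positivity) hC2top
  have hC0 : C ≠ 0 := by
    rw [hCdef]
    simp [ENNReal.rpow_eq_zero_iff, hC20, hC2top, ENNReal.rpow_eq_zero_iff]
  refine ⟨C, hCtop, fun f => ?_⟩
  set W := weakNorm n q f with hWdef
  rw [morreyNormX]
  refine iSup_le fun x => iSup_le fun r => iSup_le fun hr => ?_
  rcases eq_or_ne W ⊤ with hWt | hWt
  · rw [hWt, ENNReal.mul_top hC0]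
    exact le_top
  rcases eq_or_ne W 0 with hW0 | hW0
  · -- zero case: the integral vanishes
    have hnull : volume {y : Fin n → ℝ | (‖f y‖₊ : ℝ≥0∞) ≠ 0} = 0 := by
      have hsub : {y : Fin n → ℝ | (‖f y‖₊ : ℝ≥0∞) ≠ 0}
          ⊆ ⋃ k : ℕ, {y : Fin n → ℝ | ENNReal.ofReal (1/((k:ℝ)+1)) < (‖f y‖₊ : ℝ≥0∞)} := by
        intro y hy
        have h0 : 0 < ‖f y‖ := by
          simp only [mem_setOf_eq, Ne, ENNReal.coe_eq_zero, nnnorm_eq_zero] at hy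
          exact norm_pos_iff.mpr hy
        obtain ⟨k, hk⟩ := exists_nat_one_div_lt h0
        refine mem_iUnion.mpr ⟨k, ?_⟩
        simp only [mem_setOf_eq]
        rw [show (‖f y‖₊ : ℝ≥0∞) = ENNReal.ofReal ‖f y‖ from by rw [← ENNReal.ofReal_coe_nnreal, coe_nnnorm]]
        exact ENNReal.ofReal_lt_ofReal_iff h0 |>.mpr hk
      refine measure_mono_null hsub (measure_iUnion_null fun k => ?_)
      have := weak_meas_bound n q hq0 f (1/((k:ℝ)+1)) (by positivity)
      rw [← hWdef, hW0, ENNReal.zero_rpow_of_pos hq0, mul_zero] at this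
      exact le_antisymm this zero_le
    have hint : ∫⁻ y in cube n x r, (‖f y‖₊ : ℝ≥0∞) ^ p = 0 := by
      set N := toMeasurable volume {y : Fin n → ℝ | (‖f y‖₊ : ℝ≥0∞) ≠ 0} with hN
      have hbound : ∀ y, (‖f y‖₊ : ℝ≥0∞) ^ p ≤ N.indicator (fun _ => ⊤) y := by
        intro y
        by_cases hy : y ∈ N
        · rw [indicator_of_mem hy]; exact le_top
        · rw [indicator_of_notMem hy]
          have : (‖f y‖₊ : ℝ≥0∞) = 0 := by
            by_contra h
            exact hy (subset_toMeasurable _ _ h)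
          rw [this, ENNReal.zero_rpow_of_pos hp0]
      refine le_antisymm ?_ zero_le
      calc ∫⁻ y in cube n x r, (‖f y‖₊ : ℝ≥0∞) ^ p
          ≤ ∫⁻ y in cube n x r, N.indicator (fun _ => ⊤) y := lintegral_mono hbound
        _ ≤ ∫⁻ y, N.indicator (fun _ => ⊤) y := setLIntegral_le_lintegral _ _
        _ = ⊤ * volume N := by
            rw [lintegral_indicator (measurableSet_toMeasurable _ _), setLIntegral_const]
        _ = 0 := by rw [measure_toMeasurable, hnull, mul_zero]
    rw [hint, mul_zero, ENNReal.zero_rpow_of_pos (by positivity), mul_zero]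
    exact zero_le
  -- main case : 0 < W < ⊤
  have hWt0 : 0 < W.toReal := ENNReal.toReal_pos hW0 hWt
  set Wt := W.toReal with hWtdef
  have hWre : ENNReal.ofReal Wt = W := ENNReal.ofReal_toReal hWt
  set lam0 := Wt * r ^ (-α) with hlam0def
  have hl : 0 < lam0 := by positivity
  have key : ∫⁻ y in cube n x r, (‖f y‖₊ : ℝ≥0∞) ^ p
      ≤ C2 * (W ^ p * ENNReal.ofReal (r ^ ((n:ℝ) - α * p))) := by
    refine le_trans (cube_int_bound n q p lam0 hq0 hp0 hl f x r hr) (le_of_eq ?_)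
    have e1 : ENNReal.ofReal (lam0 ^ p) * ENNReal.ofReal (r ^ n)
        = W ^ p * ENNReal.ofReal (r ^ ((n:ℝ) - α * p)) := by
      have l1 : lam0 ^ p * r ^ n = Wt ^ p * r ^ ((n:ℝ) - α * p) := by
        rw [hlam0def, Real.mul_rpow hWt0.le (by positivity), ← Real.rpow_mul hr.le,
          ← Real.rpow_natCast r n, mul_assoc, ← Real.rpow_add hr]
        congr 2
        ring
      rw [← ENNReal.ofReal_mul (by positivity), l1,
        ENNReal.ofReal_mul (by positivity), ← ENNReal.ofReal_rpow_of_pos hWt0, hWre]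
    have e2 : ENNReal.ofReal (2 ^ p * lam0 ^ (p - q)) * W ^ q
        = ENNReal.ofReal ((2:ℝ) ^ p) * (W ^ p * ENNReal.ofReal (r ^ ((n:ℝ) - α * p))) := by
      have l2 : (2:ℝ) ^ p * lam0 ^ (p - q)
          = 2 ^ p * (Wt ^ (p - q) * r ^ ((n:ℝ) - α * p)) := by
        rw [hlam0def, Real.mul_rpow hWt0.le (by positivity), ← Real.rpow_mul hr.le]
        congr 2
        rw [show -α * (p - q) = α * q - α * p by ring, hαq]
      rw [l2, ENNReal.ofReal_mul (by positivity), ENNReal.ofReal_mul (by positivity),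
        ← ENNReal.ofReal_rpow_of_pos hWt0, hWre]
      have : W ^ (p - q) * W ^ q = W ^ p := by
        rw [← ENNReal.rpow_add _ _ hW0 hWt]
        congr 1
        ring
      calc ENNReal.ofReal ((2:ℝ)^p) * (W ^ (p-q) * ENNReal.ofReal (r ^ ((n:ℝ) - α * p))) * W ^ q
          = ENNReal.ofReal ((2:ℝ)^p) * ((W ^ (p-q) * W ^ q) * ENNReal.ofReal (r ^ ((n:ℝ) - α * p))) := by ring
        _ = _ := by rw [this]
    rw [e1, e2, hC2def]
    ring
  -- conclude
  have hinv : (ENNReal.ofReal (r ^ (n:ℕ)))⁻¹ * ENNReal.ofReal (r ^ ((n:ℝ) - α * p))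
      = ENNReal.ofReal (r ^ (-(α * p))) := by
    rw [← Real.rpow_natCast r n, ← ENNReal.ofReal_inv_of_pos (by positivity),
      ← Real.rpow_neg hr.le, ← ENNReal.ofReal_mul (by positivity), ← Real.rpow_add hr]
    congr 2
    ring
  calc ENNReal.ofReal (r ^ α) *
      ((ENNReal.ofReal (r ^ (n:ℕ)))⁻¹ * ∫⁻ y in cube n x r, (‖f y‖₊ : ℝ≥0∞) ^ p) ^ (1/p)
      ≤ ENNReal.ofReal (r ^ α) *
        ((ENNReal.ofReal (r ^ (n:ℕ)))⁻¹ * (C2 * (W ^ p * ENNReal.ofReal (r ^ ((n:ℝ) - α * p))))) ^ (1/p) := by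
        exact mul_le_mul_right (ENNReal.rpow_le_rpow (mul_le_mul_right key _) (by positivity)) _
    _ = ENNReal.ofReal (r ^ α) *
        (C2 * W ^ p * ENNReal.ofReal (r ^ (-(α * p)))) ^ (1/p) := by
        rw [show (ENNReal.ofReal (r ^ (n:ℕ)))⁻¹ * (C2 * (W ^ p * ENNReal.ofReal (r ^ ((n:ℝ) - α * p))))
          = C2 * W ^ p * ((ENNReal.ofReal (r ^ (n:ℕ)))⁻¹ * ENNReal.ofReal (r ^ ((n:ℝ) - α * p))) by ring,
          hinv]
    _ = ENNReal.ofReal (r ^ α) * (C * W * ENNReal.ofReal (r ^ (-α))) := by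
        rw [ENNReal.mul_rpow_of_nonneg _ _ (by positivity),
          ENNReal.mul_rpow_of_nonneg _ _ (by positivity),
          ← ENNReal.rpow_mul W, mul_one_div_cancel hp0.ne', ENNReal.rpow_one,
          ENNReal.ofReal_rpow_of_pos (by positivity), ← Real.rpow_mul hr.le, hCdef,
          show -(α * p) * (1/p) = -α from by field_simp]
    _ = C * W * (ENNReal.ofReal (r ^ α) * ENNReal.ofReal (r ^ (-α))) := by ring
    _ = C * W := by
        rw [← ENNReal.ofReal_mul (by positivity), ← Real.rpow_add hr]
        simp
end
end

section
/- If w : ℝ^n → [0,∞] satisfies M(w)(x) < ∞ for almost every x, then for every 0 < δ < 1 the function (M(w))^δ is an A_1 weight, i.e., M((M w)^δ)(x) ≤ C (M w(x))^δ for a.e. x, with constant C depending only on n and δ (not on w). -/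
open MeasureTheory ENNReal Set Filter Topology

noncomputable section

def maxU (n : ℕ) (g : (Fin n → ℝ) → ℝ≥0∞) (x : Fin n → ℝ) : ℝ≥0∞ :=
  ⨆ (z : Fin n → ℝ) (r : ℝ) (_ : 0 < r) (_ : x ∈ cube n z r),
    (volume (cube n z r))⁻¹ * ∫⁻ y in cube n z r, g y

namespace CR

variable {n : ℕ}

/-- ball-average -/
def avg (n : ℕ) (g : (Fin n → ℝ) → ℝ≥0∞) (z : Fin n → ℝ) (ρ : ℝ) : ℝ≥0∞ :=
  (volume (Metric.closedBall z ρ))⁻¹ * ∫⁻ y in Metric.closedBall z ρ, g y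

/-- ball maximal function -/
def MB (n : ℕ) (g : (Fin n → ℝ) → ℝ≥0∞) (x : Fin n → ℝ) : ℝ≥0∞ :=
  ⨆ (z : Fin n → ℝ) (ρ : ℝ) (_ : 0 < ρ) (_ : x ∈ Metric.closedBall z ρ), avg n g z ρ

lemma cube_eq (z : Fin n → ℝ) {r : ℝ} (hr : 0 ≤ r) :
    cube n z r = Metric.closedBall z (r / 2) := by
  ext y
  simp only [cube, mem_setOf_eq, Metric.mem_closedBall,
    dist_pi_le_iff (by linarith : (0:ℝ) ≤ r / 2), Real.dist_eq]

lemma maxU_eq (g : (Fin n → ℝ) → ℝ≥0∞) (x : Fin n → ℝ) : maxU n g x = MB n g x := by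
  apply le_antisymm
  · apply iSup_le fun z => iSup_le fun r => iSup_le fun hr => iSup_le fun hx => ?_
    rw [cube_eq z hr.le] at *
    refine le_trans (le_of_eq rfl) ?_
    exact le_iSup_of_le z <| le_iSup_of_le (r/2) <| le_iSup_of_le (by linarith) <|
      le_iSup_of_le hx le_rfl
  · apply iSup_le fun z => iSup_le fun ρ => iSup_le fun hρ => iSup_le fun hx => ?_
    have h2 : cube n z (2*ρ) = Metric.closedBall z ρ := by
      rw [cube_eq z (by linarith)]; norm_num
    refine le_iSup_of_le z <| le_iSup_of_le (2*ρ) <| le_iSup_of_le (by linarith) ?_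
    rw [h2]
    exact le_iSup_of_le hx le_rfl

lemma vol_cb (z : Fin n → ℝ) {ρ : ℝ} (hρ : 0 ≤ ρ) :
    volume (Metric.closedBall z ρ) = ENNReal.ofReal ((2*ρ)^n) := by
  rw [Real.volume_pi_closedBall z hρ, Fintype.card_fin]

lemma vol_cb_pos (z : Fin n → ℝ) {ρ : ℝ} (hρ : 0 < ρ) :
    0 < volume (Metric.closedBall z ρ) := by
  rw [vol_cb z hρ.le]
  exact ENNReal.ofReal_pos.2 (pow_pos (by linarith) n)

lemma vol_cb_ne_top (z : Fin n → ℝ) (ρ : ℝ) :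
    volume (Metric.closedBall z ρ) ≠ ⊤ := by
  rcases le_or_gt 0 ρ with h | h
  · rw [vol_cb z h]; exact ENNReal.ofReal_ne_top
  · rw [Metric.closedBall_eq_empty.2 h]; simp

lemma vol_scale (z : Fin n → ℝ) {ρ t : ℝ} (hρ : 0 ≤ ρ) (ht : 0 ≤ t) :
    volume (Metric.closedBall z (t*ρ)) = ENNReal.ofReal (t^n) * volume (Metric.closedBall z ρ) := by
  rw [vol_cb z (by positivity), vol_cb z hρ, ← ENNReal.ofReal_mul (by positivity)]
  ring_nf

lemma inv_vol_scale (z : Fin n → ℝ) {ρ t : ℝ} (hρ : 0 < ρ) (ht : 0 < t) :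
    (volume (Metric.closedBall z ρ))⁻¹
      = ENNReal.ofReal (t^n) * (volume (Metric.closedBall z (t*ρ)))⁻¹ := by
  have ha : ENNReal.ofReal (t^n) ≠ 0 := (ENNReal.ofReal_pos.2 (by positivity)).ne'
  have hat : ENNReal.ofReal (t^n) ≠ ⊤ := ENNReal.ofReal_ne_top
  rw [vol_scale z hρ.le ht.le, ENNReal.mul_inv (Or.inl ha) (Or.inl hat), ← mul_assoc,
    ENNReal.mul_inv_cancel ha hat, one_mul]

lemma avg_le_MB {g : (Fin n → ℝ) → ℝ≥0∞} {x z : Fin n → ℝ} {ρ : ℝ} (hρ : 0 < ρ)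
    (hx : x ∈ Metric.closedBall z ρ) : avg n g z ρ ≤ MB n g x :=
  le_iSup_of_le z <| le_iSup_of_le ρ <| le_iSup_of_le hρ <| le_iSup_of_le hx le_rfl

def MBo (n : ℕ) (g : (Fin n → ℝ) → ℝ≥0∞) (x : Fin n → ℝ) : ℝ≥0∞ :=
  ⨆ (z : Fin n → ℝ) (ρ : ℝ) (_ : 0 < ρ) (_ : x ∈ Metric.ball z ρ), avg n g z ρ

lemma MBo_eq (g : (Fin n → ℝ) → ℝ≥0∞) (x : Fin n → ℝ) : MBo n g x = MB n g x := by
  apply le_antisymm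
  · exact iSup_le fun z => iSup_le fun ρ => iSup_le fun hρ => iSup_le fun hx =>
      le_iSup_of_le z <| le_iSup_of_le ρ <| le_iSup_of_le hρ <|
        le_iSup_of_le (Metric.ball_subset_closedBall hx) le_rfl
  · apply iSup_le fun z => iSup_le fun ρ => iSup_le fun hρ => iSup_le fun hx => ?_
    set I := ∫⁻ y in Metric.closedBall z ρ, g y with hI
    set ρk : ℕ → ℝ := fun k => ρ * (1 + 1/(k+1)) with hρk
    have hρk_gt : ∀ k, ρ < ρk k := fun k => by
      have h1 : (0:ℝ) < 1/((k:ℝ)+1) := by positivity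
      simp only [hρk]; nlinarith
    set vk : ℕ → ℝ≥0∞ := fun k => ENNReal.ofReal ((2 * ρk k)^n) with hvk
    have hvol : ∀ k, volume (Metric.closedBall z (ρk k)) = vk k :=
      fun k => vol_cb z (by linarith [hρk_gt k])
    have hanti : Antitone vk := by
      intro a b hab
      apply ENNReal.ofReal_le_ofReal
      have h1 : ρk b ≤ ρk a := by
        have : 1/((b:ℝ)+1) ≤ 1/((a:ℝ)+1) := by
          apply one_div_le_one_div_of_le (by positivity)
          have : (a:ℝ) ≤ b := Nat.cast_le.2 hab
          linarith
        simp only [hρk]; nlinarith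
      have h2 : 0 ≤ 2 * ρk b := by linarith [hρk_gt b]
      exact pow_le_pow_left₀ h2 (by linarith) n
    have hinf : ⨅ k, vk k = ENNReal.ofReal ((2*ρ)^n) := by
      have htend : Tendsto vk atTop (𝓝 (ENNReal.ofReal ((2*ρ)^n))) := by
        apply ENNReal.tendsto_ofReal
        have h0 : Tendsto (fun k : ℕ => ρk k) atTop (𝓝 ρ) := by
          have := tendsto_one_div_add_atTop_nhds_zero_nat (𝕜 := ℝ)
          have h1 : Tendsto (fun k : ℕ => 1 + 1/((k:ℝ)+1)) atTop (𝓝 1) := by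
            simpa using tendsto_const_nhds.add this
          simpa [hρk, one_div] using (tendsto_const_nhds (x := ρ)).mul h1
        exact ((tendsto_const_nhds (x := (2:ℝ))).mul h0).pow n
      exact tendsto_nhds_unique (tendsto_atTop_iInf hanti) htend
    have step : ∀ k, (vk k)⁻¹ * I ≤ MBo n g x := by
      intro k
      have hxk : x ∈ Metric.ball z (ρk k) := by
        simp only [Metric.mem_ball]
        exact lt_of_le_of_lt (Metric.mem_closedBall.1 hx) (hρk_gt k)
      have h1 : (vk k)⁻¹ * I ≤ avg n g z (ρk k) := by
        rw [avg, hvol k]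
        exact mul_le_mul_right (lintegral_mono_set
          (Metric.closedBall_subset_closedBall (hρk_gt k).le)) _
      exact h1.trans <| le_iSup_of_le z <| le_iSup_of_le (ρk k) <|
        le_iSup_of_le (by linarith [hρk_gt k]) <| le_iSup_of_le hxk le_rfl
    calc avg n g z ρ = (ENNReal.ofReal ((2*ρ)^n))⁻¹ * I := by rw [avg, vol_cb z hρ.le]
      _ = (⨅ k, vk k)⁻¹ * I := by rw [hinf]
      _ = (⨆ k, (vk k)⁻¹) * I := by rw [ENNReal.inv_iInf]
      _ = ⨆ k, (vk k)⁻¹ * I := ENNReal.iSup_mul _ _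
      _ ≤ MBo n g x := iSup_le step

lemma MB_lsc (g : (Fin n → ℝ) → ℝ≥0∞) : LowerSemicontinuous (MB n g) := by
  intro x y hy
  rw [← MBo_eq] at hy
  simp only [MBo, lt_iSup_iff] at hy
  obtain ⟨z, ρ, hρ, hx, hlt⟩ := hy
  filter_upwards [Metric.isOpen_ball.eventually_mem hx] with x' hx'
  rw [← MBo_eq]
  exact lt_of_lt_of_le hlt <| le_iSup_of_le z <| le_iSup_of_le ρ <|
    le_iSup_of_le hρ <| le_iSup_of_le hx' le_rfl

lemma MB_measurable (g : (Fin n → ℝ) → ℝ≥0∞) : Measurable (MB n g) :=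
  (MB_lsc g).measurable

variable {α : Type*} [MeasurableSpace α] {μ : Measure α}

lemma lintegral_union_ge (v : α → ℝ≥0∞) {s t : Set α} (hs : MeasurableSet s)
    (ht : MeasurableSet t) (hd : Disjoint s t) :
    (∫⁻ y in s, v y ∂μ) + ∫⁻ y in t, v y ∂μ ≤ ∫⁻ y in s ∪ t, v y ∂μ := by
  rw [← lintegral_indicator hs, ← lintegral_indicator ht, ← lintegral_indicator (hs.union ht)]
  refine le_trans (le_lintegral_add _ _) (le_of_eq ?_)
  congr 1
  exact (Set.indicator_union_of_disjoint hd v).symm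

lemma sum_setLIntegral_le {ι : Type*} (v : α → ℝ≥0∞) (u : Set ι) (hu : u.Countable)
    (B : ι → Set α) (hm : ∀ i, MeasurableSet (B i)) (hd : u.PairwiseDisjoint B) :
    ∑' i : u, ∫⁻ y in B i, v y ∂μ ≤ ∫⁻ y, v y ∂μ := by
  rw [ENNReal.tsum_eq_iSup_sum]
  apply iSup_le
  intro F
  have key : ∀ (F : Finset u), (∑ i ∈ F, ∫⁻ y in B i, v y ∂μ)
      ≤ ∫⁻ y in ⋃ i ∈ F, B i, v y ∂μ := by
    classical
    intro F
    induction F using Finset.induction_on with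
    | empty => simp
    | @insert i F hiF ih =>
      rw [Finset.sum_insert hiF]
      have hdisj : Disjoint (B i) (⋃ j ∈ F, B (j:ι)) := by
        apply Set.disjoint_iUnion₂_right.2
        intro j hjF
        exact hd i.2 j.2 (fun h => hiF (by rw [Subtype.ext h]; exact hjF))
      calc (∫⁻ y in B i, v y ∂μ) + ∑ j ∈ F, ∫⁻ y in B j, v y ∂μ
          ≤ (∫⁻ y in B i, v y ∂μ) + ∫⁻ y in ⋃ j ∈ F, B (j:ι), v y ∂μ := by gcongr
        _ ≤ ∫⁻ y in B i ∪ ⋃ j ∈ F, B (j:ι), v y ∂μ :=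
            lintegral_union_ge v (hm i) (MeasurableSet.biUnion F.countable_toSet
              (fun j _ => hm j)) hdisj
        _ = ∫⁻ y in ⋃ j ∈ insert i F, B (j:ι), v y ∂μ := by
            rw [Finset.set_biUnion_insert]
  exact (key F).trans (by
    apply lintegral_mono' Measure.restrict_le_self le_rfl)


lemma weak (hn : 0 < n) (v : (Fin n → ℝ) → ℝ≥0∞) (hv : ∫⁻ y, v y < ⊤)
    {lam : ℝ≥0∞} (hl0 : lam ≠ 0) (hlt : lam ≠ ⊤) :
    volume {y | lam < MB n v y} ≤ ENNReal.ofReal (4^n) * lam⁻¹ * ∫⁻ y, v y := by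
  classical
  set A := ∫⁻ y, v y with hA
  set E := {y | lam < MB n v y} with hE
  have hsel : ∀ a : E, ∃ z : Fin n → ℝ, ∃ ρ : ℝ, dist (a : Fin n → ℝ) z ≤ ρ ∧ 0 < ρ ∧
      lam < avg n v z ρ := by
    intro a
    have ha : lam < MB n v (a : Fin n → ℝ) := a.2
    simpa [MB, lt_iSup_iff] using ha
  choose z r hmem hr hlav using hsel
  -- basic estimate on each chosen ball
  have hball : ∀ a : E, lam * volume (Metric.closedBall (z a) (r a))
      ≤ ∫⁻ y in Metric.closedBall (z a) (r a), v y := by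
    intro a
    have h0 : volume (Metric.closedBall (z a) (r a)) ≠ 0 := (vol_cb_pos _ (hr a)).ne'
    have h1 : volume (Metric.closedBall (z a) (r a)) ≠ ⊤ := vol_cb_ne_top _ _
    have := mul_le_mul_left (hlav a).le (volume (Metric.closedBall (z a) (r a)))
    rwa [avg, mul_comm _ (∫⁻ y in _, v y), mul_assoc,
      ENNReal.inv_mul_cancel h0 h1, mul_one] at this
  have hvolK : ∀ a : E, volume (Metric.closedBall (z a) (r a)) ≤ lam⁻¹ * A := by
    intro a
    calc volume (Metric.closedBall (z a) (r a))
        = lam⁻¹ * (lam * volume (Metric.closedBall (z a) (r a))) := by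
          rw [← mul_assoc, ENNReal.inv_mul_cancel hl0 hlt, one_mul]
      _ ≤ lam⁻¹ * A := by
          refine mul_le_mul_right ((hball a).trans ?_) _
          exact lintegral_mono' Measure.restrict_le_self le_rfl
  set K : ℝ≥0∞ := lam⁻¹ * A with hK
  have hKtop : K ≠ ⊤ := by
    refine ENNReal.mul_ne_top ?_ hv.ne
    simp [ENNReal.inv_ne_top, hl0]
  set R : ℝ := K.toReal ^ ((n : ℝ)⁻¹) with hR
  have hrR : ∀ a : E, r a ≤ R := by
    intro a
    have h2 : (2 * r a) ^ n ≤ K.toReal := by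
      rw [← ENNReal.ofReal_le_iff_le_toReal hKtop, ← vol_cb (z a) (by linarith [hr a])]
      exact hvolK a
    have hRnn : 0 ≤ R := Real.rpow_nonneg ENNReal.toReal_nonneg _
    by_contra hcon
    push_neg at hcon
    have h3 : R ^ n < (2 * r a) ^ n := by
      apply pow_lt_pow_left₀ (by linarith [hr a]) hRnn (by omega)
    have h4 : R ^ n = K.toReal := by
      rw [hR, ← Real.rpow_natCast (K.toReal ^ ((n:ℝ)⁻¹)) n, ← Real.rpow_mul
        ENNReal.toReal_nonneg, inv_mul_cancel₀ (by exact_mod_cast hn.ne'), Real.rpow_one]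
    linarith
  obtain ⟨u, hu_sub, hu_disj, hu_cov⟩ :=
    Vitali.exists_disjoint_subfamily_covering_enlargement_closedBall (Set.univ : Set E)
      z r R (fun a _ => hrR a) 4 (by norm_num)
  have hu_count : u.Countable := by
    apply hu_disj.countable_of_nonempty_interior
    intro a _
    rw [interior_closedBall (z a) (hr a).ne']
    exact Metric.nonempty_ball.2 (hr a)
  have hcov : E ⊆ ⋃ b ∈ u, Metric.closedBall (z b) (4 * r b) := by
    intro y hy
    obtain ⟨b, hb, hsub⟩ := hu_cov ⟨y, hy⟩ (Set.mem_univ _)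
    exact Set.mem_biUnion hb (hsub (Metric.mem_closedBall.2 (hmem ⟨y, hy⟩)))
  calc volume E ≤ volume (⋃ b ∈ u, Metric.closedBall (z b) (4 * r b)) := measure_mono hcov
    _ ≤ ∑' b : u, volume (Metric.closedBall (z b) (4 * r b)) := measure_biUnion_le _ hu_count _
    _ = ∑' b : u, ENNReal.ofReal (4^n) * volume (Metric.closedBall (z b) (r b)) := by
        congr 1; funext b
        exact vol_scale (z b) (hr (b:E)).le (by norm_num)
    _ ≤ ∑' b : u, ENNReal.ofReal (4^n) *
          (lam⁻¹ * ∫⁻ y in Metric.closedBall (z b) (r b), v y) := by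
        apply ENNReal.tsum_le_tsum; intro b
        refine mul_le_mul_right ?_ _
        calc volume (Metric.closedBall (z (b:E)) (r (b:E)))
            = lam⁻¹ * (lam * volume (Metric.closedBall (z (b:E)) (r (b:E)))) := by
              rw [← mul_assoc, ENNReal.inv_mul_cancel hl0 hlt, one_mul]
          _ ≤ lam⁻¹ * ∫⁻ y in Metric.closedBall (z (b:E)) (r (b:E)), v y :=
              mul_le_mul_right (hball _) _
    _ = ENNReal.ofReal (4^n) * lam⁻¹ *
          ∑' b : u, ∫⁻ y in Metric.closedBall (z b) (r b), v y := by
        rw [← ENNReal.tsum_mul_left]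
        congr 1; funext b; ring
    _ ≤ ENNReal.ofReal (4^n) * lam⁻¹ * A := by
        refine mul_le_mul_right ?_ _
        exact sum_setLIntegral_le (μ := volume) v u hu_count
          (fun a : E => Metric.closedBall (z a) (r a))
          (fun b => measurableSet_closedBall)
          (fun b hb c hc hbc => hu_disj hb hc hbc)


lemma measurable_MB_rpow (v : (Fin n → ℝ) → ℝ≥0∞) (δ : ℝ) :
    Measurable (fun y => (MB n v y) ^ δ) :=
  ENNReal.continuous_rpow_const.measurable.comp (MB_measurable v)

lemma vol_top_eq_zero (hn : 0 < n) (v : (Fin n → ℝ) → ℝ≥0∞) (hv : ∫⁻ y, v y < ⊤)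
    {lam0 : ℝ≥0∞} (h0 : lam0 ≠ 0) (ht : lam0 ≠ ⊤) :
    volume {y | MB n v y = ⊤} = 0 := by
  have hksub : ∀ k : ℕ, {y | MB n v y = ⊤} ⊆ {y | 2^k * lam0 < MB n v y} := by
    intro k y hy
    simp only [mem_setOf_eq] at hy ⊢
    rw [hy]
    exact lt_top_iff_ne_top.2 (ENNReal.mul_ne_top (by simp [pow_ne_top]) ht)
  have hbound : ∀ k : ℕ, volume {y | MB n v y = ⊤} ≤
      (2⁻¹)^k * (ENNReal.ofReal (4^n) * lam0⁻¹ * ∫⁻ y, v y) := by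
    intro k
    have hk0 : (2:ℝ≥0∞)^k * lam0 ≠ 0 := by
      simp [h0, pow_ne_zero]
    have hkt : (2:ℝ≥0∞)^k * lam0 ≠ ⊤ := ENNReal.mul_ne_top (by simp [pow_ne_top]) ht
    calc volume {y | MB n v y = ⊤} ≤ volume {y | 2^k * lam0 < MB n v y} :=
          measure_mono (hksub k)
      _ ≤ ENNReal.ofReal (4^n) * ((2:ℝ≥0∞)^k * lam0)⁻¹ * ∫⁻ y, v y := weak hn v hv hk0 hkt
      _ = (2⁻¹)^k * (ENNReal.ofReal (4^n) * lam0⁻¹ * ∫⁻ y, v y) := by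
          rw [ENNReal.mul_inv (Or.inl (by simp [pow_ne_zero])) (Or.inl (by simp [pow_ne_top]))]
          rw [ENNReal.inv_pow]
          ring
  have htend : Tendsto (fun k : ℕ => (2⁻¹:ℝ≥0∞)^k * (ENNReal.ofReal (4^n) * lam0⁻¹ * ∫⁻ y, v y))
      atTop (𝓝 0) := by
    have h1 : Tendsto (fun k : ℕ => (2⁻¹:ℝ≥0∞)^k) atTop (𝓝 0) :=
      ENNReal.tendsto_pow_atTop_nhds_zero_of_lt_one (by norm_num)
    have hfin : ENNReal.ofReal (4^n) * lam0⁻¹ * (∫⁻ y, v y) ≠ ⊤ :=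
      ENNReal.mul_ne_top (ENNReal.mul_ne_top ENNReal.ofReal_ne_top (by simp [h0])) hv.ne
    simpa using ENNReal.Tendsto.mul_const h1 (Or.inr hfin)
  exact le_antisymm (ge_of_tendsto' htend hbound) zero_le


lemma kolm (hn : 0 < n) {δ : ℝ} (hδ : 0 < δ) (v : (Fin n → ℝ) → ℝ≥0∞)
    (hv0 : ∫⁻ y, v y ≠ 0) (hvt : ∫⁻ y, v y ≠ ⊤) (z : Fin n → ℝ) {ρ : ℝ} (hρ : 0 < ρ) :
    ∫⁻ y in Metric.closedBall z ρ, (MB n v y) ^ δ ≤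
      (1 + (2:ℝ≥0∞)^δ * (1 - (2:ℝ≥0∞)^(δ-1))⁻¹) *
        (ENNReal.ofReal (4^n) * (∫⁻ y, v y) * (volume (Metric.closedBall z ρ))⁻¹) ^ δ *
        volume (Metric.closedBall z ρ) := by
  classical
  set Q := Metric.closedBall z ρ with hQ
  set vQ := volume Q with hvQ
  set A := ∫⁻ y, v y with hA
  have hvQ0 : vQ ≠ 0 := (vol_cb_pos z hρ).ne'
  have hvQt : vQ ≠ ⊤ := vol_cb_ne_top z ρ
  have h4n0 : ENNReal.ofReal ((4:ℝ)^n) ≠ 0 := (ENNReal.ofReal_pos.2 (by positivity)).ne'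
  have h4nt : ENNReal.ofReal ((4:ℝ)^n) ≠ ⊤ := ENNReal.ofReal_ne_top
  set a : ℝ≥0∞ := ENNReal.ofReal ((4:ℝ)^n) * A with ha
  have ha0 : a ≠ 0 := mul_ne_zero h4n0 hv0
  have hat : a ≠ ⊤ := ENNReal.mul_ne_top h4nt hvt
  set lam0 : ℝ≥0∞ := a * vQ⁻¹ with hlam0
  have hl0 : lam0 ≠ 0 := mul_ne_zero ha0 (ENNReal.inv_ne_zero.2 hvQt)
  have hlt : lam0 ≠ ⊤ := ENNReal.mul_ne_top hat (ENNReal.inv_ne_top.2 hvQ0)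
  have hlamvol : a * lam0⁻¹ = vQ := by
    rw [hlam0, ENNReal.mul_inv (Or.inl ha0) (Or.inl hat), inv_inv, ← mul_assoc,
      ENNReal.mul_inv_cancel ha0 hat, one_mul]
  set f := MB n v with hf
  have hfm : Measurable f := MB_measurable v
  set T0 : Set (Fin n → ℝ) := Q ∩ {y | f y ≤ lam0} with hT0
  set T : ℕ → Set (Fin n → ℝ) :=
    fun j => (Q ∩ {y | 2^j * lam0 < f y}) ∩ {y | f y ≤ 2^(j+1) * lam0} with hT
  set Tinf : Set (Fin n → ℝ) := {y | f y = ⊤} with hTinf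
  have cover : Q ⊆ (T0 ∪ Tinf) ∪ ⋃ j, T j := by
    intro y hy
    by_cases h1 : f y ≤ lam0
    · exact Or.inl (Or.inl ⟨hy, h1⟩)
    by_cases h2 : f y = ⊤
    · exact Or.inl (Or.inr h2)
    have hex : ∃ j : ℕ, f y ≤ 2^(j+1) * lam0 := by
      obtain ⟨m, hm⟩ := ENNReal.exists_nat_gt (ENNReal.mul_ne_top h2 (ENNReal.inv_ne_top.2 hl0))
      refine ⟨m, ?_⟩
      have hfy : f y = f y * lam0⁻¹ * lam0 := by
        rw [mul_assoc, ENNReal.inv_mul_cancel hl0 hlt, mul_one]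
      rw [hfy]
      refine mul_le_mul_left (hm.le.trans ?_) _
      have h3 : (m:ℝ≥0∞) ≤ 2^m := by
        exact_mod_cast (Nat.lt_two_pow_self (n := m)).le
      exact h3.trans (pow_le_pow_right₀ (by norm_num) (by omega))
    refine Or.inr (Set.mem_iUnion.2 ⟨Nat.find hex, ⟨⟨hy, ?_⟩, Nat.find_spec hex⟩⟩)
    rcases Nat.eq_zero_or_pos (Nat.find hex) with hj | hj
    · rw [hj]; simpa using not_le.1 h1
    · obtain ⟨k, hk⟩ := Nat.exists_eq_succ_of_ne_zero hj.ne'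
      have := Nat.find_min hex (by omega : k < Nat.find hex)
      rw [hk]
      exact not_le.1 this
  have hmT0 : MeasurableSet T0 :=
    measurableSet_closedBall.inter (hfm measurableSet_Iic)
  have hmT : ∀ j, MeasurableSet (T j) := fun j =>
    (measurableSet_closedBall.inter (hfm measurableSet_Ioi)).inter (hfm measurableSet_Iic)
  -- main splitting
  have split : ∫⁻ y in Q, f y ^ δ ≤
      (∫⁻ y in T0, f y ^ δ) + (∫⁻ y in Tinf, f y ^ δ) + ∑' j, ∫⁻ y in T j, f y ^ δ := by
    calc ∫⁻ y in Q, f y ^ δ ≤ ∫⁻ y in (T0 ∪ Tinf) ∪ ⋃ j, T j, f y ^ δ :=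
          lintegral_mono_set cover
      _ ≤ (∫⁻ y in T0 ∪ Tinf, f y ^ δ) + ∫⁻ y in ⋃ j, T j, f y ^ δ :=
          (lintegral_mono' (Measure.restrict_union_le _ _) le_rfl).trans
            (le_of_eq (lintegral_add_measure _ _ _))
      _ ≤ ((∫⁻ y in T0, f y ^ δ) + ∫⁻ y in Tinf, f y ^ δ) + ∑' j, ∫⁻ y in T j, f y ^ δ := by
          gcongr
          · exact (lintegral_mono' (Measure.restrict_union_le _ _) le_rfl).trans
              (le_of_eq (lintegral_add_measure _ _ _))
          · exact lintegral_iUnion_le _ _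
  have hbT0 : (∫⁻ y in T0, f y ^ δ) ≤ lam0 ^ δ * vQ := by
    calc (∫⁻ y in T0, f y ^ δ) ≤ ∫⁻ _ in T0, lam0 ^ δ :=
          setLIntegral_mono' hmT0 (fun y hy => ENNReal.rpow_le_rpow hy.2 hδ.le)
      _ = lam0 ^ δ * volume T0 := setLIntegral_const _ _
      _ ≤ lam0 ^ δ * vQ := mul_le_mul_right (measure_mono inter_subset_left) _
  have hbTinf : (∫⁻ y in Tinf, f y ^ δ) = 0 :=
    setLIntegral_measure_zero _ _
      (vol_top_eq_zero hn v (lt_top_iff_ne_top.2 hvt) hl0 hlt)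
  set r : ℝ≥0∞ := (2:ℝ≥0∞) ^ (δ - 1) with hr
  have hbT : ∀ j, (∫⁻ y in T j, f y ^ δ) ≤ r ^ j * ((2:ℝ≥0∞)^δ * (lam0 ^ δ * vQ)) := by
    intro j
    have hk0 : (2:ℝ≥0∞)^j * lam0 ≠ 0 := by simp [hl0, pow_ne_zero]
    have hkt : (2:ℝ≥0∞)^j * lam0 ≠ ⊤ := ENNReal.mul_ne_top (by simp [pow_ne_top]) hlt
    have hvolT : volume (T j) ≤ ENNReal.ofReal (4^n) * ((2:ℝ≥0∞)^j * lam0)⁻¹ * A := by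
      refine le_trans (measure_mono ?_) (weak hn v (lt_top_iff_ne_top.2 hvt) hk0 hkt)
      exact fun y hy => hy.1.2
    calc (∫⁻ y in T j, f y ^ δ) ≤ ∫⁻ _ in T j, ((2:ℝ≥0∞)^(j+1) * lam0) ^ δ :=
          setLIntegral_mono' (hmT j) (fun y hy => ENNReal.rpow_le_rpow hy.2 hδ.le)
      _ = ((2:ℝ≥0∞)^(j+1) * lam0) ^ δ * volume (T j) := setLIntegral_const _ _
      _ ≤ ((2:ℝ≥0∞)^(j+1) * lam0) ^ δ * (ENNReal.ofReal (4^n) * ((2:ℝ≥0∞)^j * lam0)⁻¹ * A) :=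
          mul_le_mul_right hvolT _
      _ = r ^ j * ((2:ℝ≥0∞)^δ * (lam0 ^ δ * vQ)) := by
          rw [ENNReal.mul_rpow_of_nonneg _ _ hδ.le,
            ENNReal.mul_inv (Or.inl (by simp [pow_ne_zero])) (Or.inl (by simp [pow_ne_top]))]
          have e1 : ((2:ℝ≥0∞)^(j+1) : ℝ≥0∞) ^ δ = (2:ℝ≥0∞) ^ (((j:ℝ)+1) * δ) := by
            rw [← ENNReal.rpow_natCast (2:ℝ≥0∞) (j+1), ← ENNReal.rpow_mul]
            congr 1; push_cast; ring
          have e2 : ((2:ℝ≥0∞)^j : ℝ≥0∞)⁻¹ = (2:ℝ≥0∞) ^ (-(j:ℝ)) := by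
            rw [← ENNReal.rpow_natCast (2:ℝ≥0∞) j, ← ENNReal.rpow_neg]
          have e3 : r ^ j = (2:ℝ≥0∞) ^ ((δ - 1) * (j:ℝ)) := by
            rw [hr, ← ENNReal.rpow_natCast ((2:ℝ≥0∞) ^ (δ-1)) j, ← ENNReal.rpow_mul]
          rw [e1, e2, e3]
          have e4 : (2:ℝ≥0∞) ^ (((j:ℝ)+1) * δ) = (2:ℝ≥0∞) ^ ((δ-1)*(j:ℝ)) * (2:ℝ≥0∞)^δ
              * (2:ℝ≥0∞)^((j:ℝ)) := by
            rw [← ENNReal.rpow_add _ _ (by norm_num) (by norm_num),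
              ← ENNReal.rpow_add _ _ (by norm_num) (by norm_num)]
            congr 1; ring
          rw [e4]
          have e5 : (2:ℝ≥0∞)^((j:ℝ)) * (2:ℝ≥0∞) ^ (-(j:ℝ)) = 1 := by
            rw [← ENNReal.rpow_add _ _ (by norm_num) (by norm_num)]
            simp
          have e6 : a * lam0⁻¹ = vQ := hlamvol
          calc (2:ℝ≥0∞) ^ ((δ-1)*(j:ℝ)) * (2:ℝ≥0∞)^δ * (2:ℝ≥0∞)^((j:ℝ)) * lam0 ^ δ *
                (ENNReal.ofReal (4^n) * ((2:ℝ≥0∞) ^ (-(j:ℝ)) * lam0⁻¹) * A)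
              = (2:ℝ≥0∞) ^ ((δ-1)*(j:ℝ)) * (2:ℝ≥0∞)^δ * lam0 ^ δ *
                ((2:ℝ≥0∞)^((j:ℝ)) * (2:ℝ≥0∞) ^ (-(j:ℝ))) * (a * lam0⁻¹) := by
                rw [ha]; ring
            _ = (2:ℝ≥0∞) ^ ((δ-1)*(j:ℝ)) * ((2:ℝ≥0∞)^δ * (lam0 ^ δ * vQ)) := by
                rw [e5, e6]; ring
  have hsum : ∑' j, (∫⁻ y in T j, f y ^ δ) ≤
      (2:ℝ≥0∞)^δ * (1 - r)⁻¹ * (lam0 ^ δ * vQ) := by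
    calc ∑' j, (∫⁻ y in T j, f y ^ δ)
        ≤ ∑' j, r ^ j * ((2:ℝ≥0∞)^δ * (lam0 ^ δ * vQ)) := ENNReal.tsum_le_tsum hbT
      _ = (∑' j, r ^ j) * ((2:ℝ≥0∞)^δ * (lam0 ^ δ * vQ)) := ENNReal.tsum_mul_right
      _ = (2:ℝ≥0∞)^δ * (1 - r)⁻¹ * (lam0 ^ δ * vQ) := by
          rw [ENNReal.tsum_geometric]; ring
  calc ∫⁻ y in Q, f y ^ δ
      ≤ (∫⁻ y in T0, f y ^ δ) + (∫⁻ y in Tinf, f y ^ δ) + ∑' j, ∫⁻ y in T j, f y ^ δ := split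
    _ ≤ lam0 ^ δ * vQ + 0 + (2:ℝ≥0∞)^δ * (1 - r)⁻¹ * (lam0 ^ δ * vQ) :=
        add_le_add (add_le_add hbT0 (le_of_eq hbTinf)) hsum
    _ = (1 + (2:ℝ≥0∞)^δ * (1 - r)⁻¹) * lam0 ^ δ * vQ := by ring
    _ = (1 + (2:ℝ≥0∞)^δ * (1 - (2:ℝ≥0∞)^(δ-1))⁻¹) *
        (ENNReal.ofReal (4^n) * A * vQ⁻¹) ^ δ * vQ := by rw [hr, hlam0, ha]


lemma split_ptwise (w : (Fin n → ℝ) → ℝ≥0∞) {z x y : Fin n → ℝ} {ρ ρ' : ℝ} {z' : Fin n → ℝ}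
    (hρ : 0 < ρ) (hρ' : 0 < ρ') (hx : x ∈ Metric.closedBall z ρ)
    (hy : y ∈ Metric.closedBall z ρ) (hy' : y ∈ Metric.closedBall z' ρ') :
    avg n w z' ρ' ≤ MB n ((Metric.closedBall z (3*ρ)).indicator w) y
      + ENNReal.ofReal (3^n) * MB n w x := by
  have hxz : dist x z ≤ ρ := hx
  have hyz : dist y z ≤ ρ := hy
  have hyz' : dist y z' ≤ ρ' := hy'
  by_cases hc : ρ' ≤ ρ
  · have hsub : Metric.closedBall z' ρ' ⊆ Metric.closedBall z (3*ρ) := by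
      intro u hu
      have h1 : dist u z' ≤ ρ' := hu
      have h3 : dist u z ≤ dist u z' + dist z' y + dist y z := dist_triangle4 u z' y z
      have h2 : dist z' y ≤ ρ' := by rw [dist_comm]; exact hyz'
      show dist u z ≤ 3*ρ
      linarith
    have heq : (∫⁻ u in Metric.closedBall z' ρ', w u) =
        ∫⁻ u in Metric.closedBall z' ρ', (Metric.closedBall z (3*ρ)).indicator w u := by
      refine setLIntegral_congr_fun measurableSet_closedBall (fun u hu => ?_)
      rw [Set.indicator_of_mem (hsub hu)]
    have he : avg n w z' ρ' = avg n ((Metric.closedBall z (3*ρ)).indicator w) z' ρ' := by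
      rw [avg, avg, heq]
    rw [he]
    exact le_trans (avg_le_MB hρ' hy') le_self_add
  · push_neg at hc
    have hx3 : x ∈ Metric.closedBall z' (3*ρ') := by
      have h3 : dist x z' ≤ dist x z + dist z y + dist y z' := dist_triangle4 x z y z'
      have h2 : dist z y ≤ ρ := by rw [dist_comm]; exact hyz
      show dist x z' ≤ 3*ρ'
      linarith
    have step : avg n w z' ρ' ≤ ENNReal.ofReal (3^n) * avg n w z' (3*ρ') := by
      rw [avg, avg, inv_vol_scale z' hρ' (by norm_num : (0:ℝ) < 3), mul_assoc]
      refine mul_le_mul_right (mul_le_mul_right ?_ _) _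
      exact lintegral_mono_set (Metric.closedBall_subset_closedBall (by linarith))
    refine le_trans step ?_
    exact le_trans (mul_le_mul_right (avg_le_MB (by linarith) hx3) _) le_add_self

lemma MB_le_split (w : (Fin n → ℝ) → ℝ≥0∞) {z x y : Fin n → ℝ} {ρ : ℝ}
    (hρ : 0 < ρ) (hx : x ∈ Metric.closedBall z ρ) (hy : y ∈ Metric.closedBall z ρ) :
    MB n w y ≤ MB n ((Metric.closedBall z (3*ρ)).indicator w) y
      + ENNReal.ofReal (3^n) * MB n w x :=
  iSup_le fun z' => iSup_le fun ρ' => iSup_le fun hρ' => iSup_le fun hy' =>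
    split_ptwise w hρ hρ' hx hy hy'

lemma MB_indicator_zero {w : (Fin n → ℝ) → ℝ≥0∞} {s : Set (Fin n → ℝ)}
    (hs : MeasurableSet s) (h0 : (∫⁻ y in s, w y) = 0) (y : Fin n → ℝ) :
    MB n (s.indicator w) y = 0 := by
  have hint : (∫⁻ u, s.indicator w u) = 0 := by
    rw [lintegral_indicator hs]; exact h0
  apply le_antisymm _ zero_le
  apply iSup_le fun z' => iSup_le fun ρ' => iSup_le fun hρ' => iSup_le fun hy' => ?_
  rw [avg]
  have h2 : (∫⁻ u in Metric.closedBall z' ρ', s.indicator w u) = 0 := by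
    refine le_antisymm (le_trans (lintegral_mono' Measure.restrict_le_self le_rfl) ?_)
      zero_le
    rw [hint]
  rw [h2, mul_zero]

/-- The main pointwise estimate, for `n ≥ 1`. -/
lemma main_ptwise (hn : 0 < n) {δ : ℝ} (hδ : 0 < δ) (hδ' : δ < 1)
    (w : (Fin n → ℝ) → ℝ≥0∞) (x : Fin n → ℝ) :
    MB n (fun y => (MB n w y) ^ δ) x ≤
      ((1 + (2:ℝ≥0∞)^δ * (1 - (2:ℝ≥0∞)^(δ-1))⁻¹) * (ENNReal.ofReal ((12:ℝ)^n))^δ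
        + (ENNReal.ofReal ((3:ℝ)^n))^δ) * (MB n w x) ^ δ := by
  set Kd : ℝ≥0∞ := 1 + (2:ℝ≥0∞)^δ * (1 - (2:ℝ≥0∞)^(δ-1))⁻¹ with hKd
  set C : ℝ≥0∞ := Kd * (ENNReal.ofReal ((12:ℝ)^n))^δ + (ENNReal.ofReal ((3:ℝ)^n))^δ with hC
  apply iSup_le fun z => iSup_le fun ρ => iSup_le fun hρ => iSup_le fun hx => ?_
  set Q := Metric.closedBall z ρ with hQ
  set vQ := volume Q with hvQ
  have hvQ0 : vQ ≠ 0 := (vol_cb_pos z hρ).ne'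
  have hvQt : vQ ≠ ⊤ := vol_cb_ne_top z ρ
  set w1 := (Metric.closedBall z (3*ρ)).indicator w with hw1
  set A := ∫⁻ u in Metric.closedBall z (3*ρ), w u with hA
  have hAw1 : (∫⁻ u, w1 u) = A := lintegral_indicator measurableSet_closedBall w
  have hx3 : x ∈ Metric.closedBall z (3*ρ) :=
    Metric.closedBall_subset_closedBall (by linarith) hx
  have hC0 : C ≠ 0 := by
    have h1 : (ENNReal.ofReal ((3:ℝ)^n))^δ ≠ 0 :=
      (ENNReal.rpow_pos (ENNReal.ofReal_pos.2 (by positivity)) ENNReal.ofReal_ne_top).ne'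
    rw [hC]
    intro hcc
    simp only [add_eq_zero] at hcc
    exact h1 hcc.2
  by_cases hAt : A = ⊤
  · have hMBx : MB n w x = ⊤ := by
      apply top_le_iff.1
      refine le_trans ?_ (avg_le_MB (by linarith : (0:ℝ) < 3*ρ) hx3)
      rw [avg, ← hA, hAt, ENNReal.mul_top]
      exact ENNReal.inv_ne_zero.2 (vol_cb_ne_top z (3*ρ))
    rw [hMBx, ENNReal.top_rpow_of_pos hδ, ENNReal.mul_top hC0]
    exact le_top
  have hK : (∫⁻ y in Q, (MB n w1 y) ^ δ) ≤
      Kd * (ENNReal.ofReal ((12:ℝ)^n))^δ * (MB n w x)^δ * vQ := by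
    by_cases hA0 : A = 0
    · have hz0 : ∀ y, MB n w1 y = 0 := MB_indicator_zero measurableSet_closedBall (hA ▸ hA0)
      have hz : (∫⁻ y in Q, (MB n w1 y) ^ δ) = 0 := by
        have he : (fun y => (MB n w1 y) ^ δ) = fun _ => (0:ℝ≥0∞) := by
          funext y; rw [hz0 y, ENNReal.zero_rpow_of_pos hδ]
        calc (∫⁻ y in Q, (MB n w1 y) ^ δ) = ∫⁻ _ in Q, (0:ℝ≥0∞) := by rw [he]
          _ = 0 := lintegral_zero
      rw [hz]; exact zero_le
    · have hkolm := kolm hn hδ w1 (hAw1 ▸ hA0) (hAw1 ▸ hAt) z hρ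
      refine le_trans hkolm ?_
      rw [hAw1]
      refine mul_le_mul_left ?_ vQ
      rw [mul_assoc Kd]
      refine mul_le_mul_right ?_ Kd
      have hAvQ : A * vQ⁻¹ ≤ ENNReal.ofReal ((3:ℝ)^n) * MB n w x := by
        have h1 : vQ⁻¹ = ENNReal.ofReal ((3:ℝ)^n) * (volume (Metric.closedBall z (3*ρ)))⁻¹ :=
          inv_vol_scale z hρ (by norm_num)
        calc A * vQ⁻¹ = ENNReal.ofReal ((3:ℝ)^n) *
              ((volume (Metric.closedBall z (3*ρ)))⁻¹ * A) := by rw [h1]; ring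
          _ ≤ ENNReal.ofReal ((3:ℝ)^n) * MB n w x :=
              mul_le_mul_right (avg_le_MB (by linarith : (0:ℝ) < 3*ρ) hx3) _
      calc (ENNReal.ofReal (4^n) * A * vQ⁻¹) ^ δ
          ≤ (ENNReal.ofReal (4^n) * (ENNReal.ofReal ((3:ℝ)^n) * MB n w x)) ^ δ := by
            apply ENNReal.rpow_le_rpow _ hδ.le
            rw [mul_assoc]
            exact mul_le_mul_right hAvQ _
        _ = (ENNReal.ofReal ((12:ℝ)^n))^δ * (MB n w x)^δ := by
            rw [← mul_assoc, ← ENNReal.ofReal_mul (by positivity), ← mul_pow]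
            norm_num
            rw [ENNReal.mul_rpow_of_nonneg _ _ hδ.le]
  have hptwise : ∀ y ∈ Q, (MB n w y)^δ ≤
      (MB n w1 y)^δ + (ENNReal.ofReal ((3:ℝ)^n) * MB n w x)^δ := by
    intro y hy
    refine le_trans (ENNReal.rpow_le_rpow (MB_le_split w hρ hx hy) hδ.le) ?_
    exact ENNReal.rpow_add_le_add_rpow _ _ hδ.le hδ'.le
  have hint : (∫⁻ y in Q, (MB n w y)^δ) ≤
      (∫⁻ y in Q, (MB n w1 y)^δ) + (ENNReal.ofReal ((3:ℝ)^n) * MB n w x)^δ * vQ := by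
    calc (∫⁻ y in Q, (MB n w y)^δ)
        ≤ ∫⁻ y in Q, ((MB n w1 y)^δ + (ENNReal.ofReal ((3:ℝ)^n) * MB n w x)^δ) :=
          setLIntegral_mono' measurableSet_closedBall hptwise
      _ = (∫⁻ y in Q, (MB n w1 y)^δ) + (ENNReal.ofReal ((3:ℝ)^n) * MB n w x)^δ * vQ := by
          rw [lintegral_add_right _ measurable_const, setLIntegral_const]
  calc avg n (fun y => (MB n w y) ^ δ) z ρ = vQ⁻¹ * ∫⁻ y in Q, (MB n w y)^δ := by rw [avg]
    _ ≤ vQ⁻¹ * ((Kd * (ENNReal.ofReal ((12:ℝ)^n))^δ * (MB n w x)^δ * vQ)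
          + ((ENNReal.ofReal ((3:ℝ)^n))^δ * (MB n w x)^δ) * vQ) := by
        refine mul_le_mul_right (hint.trans (add_le_add hK (le_of_eq ?_))) _
        rw [ENNReal.mul_rpow_of_nonneg _ _ hδ.le]
    _ = (vQ⁻¹ * vQ) * ((Kd * (ENNReal.ofReal ((12:ℝ)^n))^δ + (ENNReal.ofReal ((3:ℝ)^n))^δ)
          * (MB n w x)^δ) := by ring
    _ = C * (MB n w x) ^ δ := by
        rw [ENNReal.inv_mul_cancel hvQ0 hvQt, one_mul, hC]


lemma cb_univ_n0 (h : n = 0) (z : Fin n → ℝ) {ρ : ℝ} (hρ : 0 ≤ ρ) :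
    Metric.closedBall z ρ = Set.univ := by
  apply Set.eq_univ_of_forall
  intro y
  have he : y = z := by
    subst h
    exact funext fun i => isEmptyElim i
  simp [Metric.mem_closedBall, he, hρ, dist_self]

lemma vol_univ_n0 (h : n = 0) : (volume : Measure (Fin n → ℝ)) Set.univ = 1 := by
  have z : Fin n → ℝ := fun _ => 0
  rw [← cb_univ_n0 h z (zero_le_one), vol_cb z zero_le_one, h]
  norm_num

lemma MB_n0 (h : n = 0) (g : (Fin n → ℝ) → ℝ≥0∞) (x : Fin n → ℝ) :
    MB n g x = ∫⁻ y, g y := by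
  have havg : ∀ (z : Fin n → ℝ) {ρ : ℝ}, 0 < ρ → avg n g z ρ = ∫⁻ y, g y := by
    intro z ρ hρ
    rw [avg, cb_univ_n0 h z hρ.le, vol_univ_n0 h, inv_one, one_mul, Measure.restrict_univ]
  apply le_antisymm
  · exact iSup_le fun z => iSup_le fun ρ => iSup_le fun hρ => iSup_le fun _ =>
      le_of_eq (havg z hρ)
  · rw [← havg x one_pos]
    exact avg_le_MB one_pos (Metric.mem_closedBall_self zero_le_one)

end CR

open CR in
/-- if `M w < ∞` a.e. then for `0 < δ < 1`, `(M w)^δ` is an `A₁`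
weight, with constant depending only on `n` and `δ`. -/
theorem statement_6 (n : ℕ) (δ : ℝ) (hδ : 0 < δ) (hδ' : δ < 1) :
    ∃ C : ℝ≥0∞, 0 < C ∧ C < ⊤ ∧
      ∀ w : (Fin n → ℝ) → ℝ≥0∞,
        (∀ᵐ x : Fin n → ℝ, maxU n w x < ⊤) →
        ∀ᵐ x : Fin n → ℝ, maxU n (fun y => (maxU n w y) ^ δ) x ≤ C * (maxU n w x) ^ δ := by
  set Kd : ℝ≥0∞ := 1 + (2:ℝ≥0∞)^δ * (1 - (2:ℝ≥0∞)^(δ-1))⁻¹ with hKd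
  set C : ℝ≥0∞ := Kd * (ENNReal.ofReal ((12:ℝ)^n))^δ + (ENNReal.ofReal ((3:ℝ)^n))^δ with hC
  have h3pos : (0:ℝ≥0∞) < (ENNReal.ofReal ((3:ℝ)^n))^δ :=
    ENNReal.rpow_pos (ENNReal.ofReal_pos.2 (by positivity)) ENNReal.ofReal_ne_top
  refine ⟨C, lt_of_lt_of_le h3pos le_add_self, ?_, ?_⟩
  · -- C < ⊤
    have hr1 : (2:ℝ≥0∞)^(δ-1) < 1 := by
      have h := ENNReal.rpow_lt_rpow_of_exponent_lt (x := 2) (by norm_num) (by norm_num)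
        (show δ-1 < (0:ℝ) by linarith)
      simpa [ENNReal.rpow_zero] using h
    have hKdt : Kd ≠ ⊤ := by
      rw [hKd]
      refine ENNReal.add_ne_top.2 ⟨by simp, ?_⟩
      refine ENNReal.mul_ne_top (ENNReal.rpow_ne_top_of_nonneg hδ.le (by norm_num)) ?_
      exact ENNReal.inv_ne_top.2 (tsub_pos_of_lt hr1).ne'
    rw [hC, lt_top_iff_ne_top]
    refine ENNReal.add_ne_top.2 ⟨?_, ?_⟩
    · exact ENNReal.mul_ne_top hKdt
        (ENNReal.rpow_ne_top_of_nonneg hδ.le ENNReal.ofReal_ne_top)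
    · exact ENNReal.rpow_ne_top_of_nonneg hδ.le ENNReal.ofReal_ne_top
  · intro w _hw
    apply ae_of_all
    intro x
    simp only [maxU_eq]
    rcases Nat.eq_zero_or_pos n with hn | hn
    · -- n = 0 : everything is a constant
      have hconst : (fun y => (MB n w y) ^ δ) = fun _ => (∫⁻ u, w u) ^ δ :=
        funext fun y => by rw [MB_n0 hn]
      rw [MB_n0 hn, MB_n0 hn, hconst, lintegral_const, vol_univ_n0 hn, mul_one]
      have hC1 : (1:ℝ≥0∞) ≤ C := by
        rw [hC, hn]
        calc (1:ℝ≥0∞) = (ENNReal.ofReal ((3:ℝ)^0))^δ := by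
              norm_num
          _ ≤ _ := le_add_self
      calc (∫⁻ u, w u) ^ δ = 1 * (∫⁻ u, w u) ^ δ := (one_mul _).symm
        _ ≤ C * (∫⁻ u, w u) ^ δ := mul_le_mul_left hC1 _
    · exact main_ptwise hn hδ hδ' w x
end
end
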